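/- When restricted to 213-avoiding permutations, the middle order on S_n coincides with the Bruhat order. -/
import Mathlib


/-- The inversion sequence of a permutation `w` of `Fin n` (0-indexed values):
`invSeq w i` counts the values `j < i` appearing after `i` in one-line notation. -/
def invSeq {n : ℕ} (w : Equiv.Perm (Fin n)) (i : Fin n) : ℕ :=
  (Finset.univ.filter (fun j : Fin n => j < i ∧ w.symm i < w.symm j)).card

/-- The middle order on permutations: coordinate-wise comparison of inversion sequences. -/
def midLe {n : ℕ} (v w : Equiv.Perm (Fin n)) : Prop :=
  ∀ i, invSeq v i ≤ invSeq w i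

/-- Number of inversions of a permutation. -/
def inversions {n : ℕ} (w : Equiv.Perm (Fin n)) : ℕ :=
  (Finset.univ.filter (fun p : Fin n × Fin n => p.1 < p.2 ∧ w p.2 < w p.1)).card

/-- The (right) weak order on `S_n`: generated by covers turning an ascent into a
descent via an adjacent transposition of positions. -/
def weakLe {n : ℕ} : Equiv.Perm (Fin n) → Equiv.Perm (Fin n) → Prop :=
  Relation.ReflTransGen (fun v w => ∃ i : Fin n, ∃ h : (i : ℕ) + 1 < n,
    v i < v ⟨(i : ℕ) + 1, h⟩ ∧ w = v * Equiv.swap i ⟨(i : ℕ) + 1, h⟩)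

/-- The Bruhat order on `S_n`: generated by covers transposing two entries forming a
non-inversion and increasing the inversion count by exactly one. -/
def bruhatLe {n : ℕ} : Equiv.Perm (Fin n) → Equiv.Perm (Fin n) → Prop :=
  Relation.ReflTransGen (fun v w => ∃ i j : Fin n, i < j ∧ v i < v j ∧
    w = v * Equiv.swap i j ∧ inversions w = inversions v + 1)

/-- `w` avoids the pattern 213. -/
def Avoids213 {n : ℕ} (w : Equiv.Perm (Fin n)) : Prop :=
  ¬ ∃ i j k : Fin n, i < j ∧ j < k ∧ w j < w i ∧ w i < w k


open Finset

variable {n : ℕ}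

/-- Positional form of the inversion sequence. -/
lemma invSeq_eq_pos (w : Equiv.Perm (Fin n)) (i : Fin n) :
    invSeq w i = (univ.filter fun a : Fin n => w.symm i < a ∧ w a < i).card := by
  unfold invSeq
  apply Finset.card_bij (fun j _ => w.symm j)
  · intro j hj
    simp only [mem_filter, mem_univ, true_and] at hj ⊢
    exact ⟨hj.2, by simpa using hj.1⟩
  · intro a ha b hb hab
    exact w.symm.injective hab
  · intro a ha
    simp only [mem_filter, mem_univ, true_and] at ha
    exact ⟨w a, by simp [ha.2, ha.1], by simp⟩

lemma invSeq_le (w : Equiv.Perm (Fin n)) (i : Fin n) : invSeq w i ≤ (i : ℕ) := by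
  unfold invSeq
  calc (univ.filter fun j : Fin n => j < i ∧ w.symm i < w.symm j).card
      ≤ (univ.filter fun j : Fin n => j < i).card :=
        Finset.card_le_card (Finset.filter_subset_filter _ (fun j hj => hj) |>.trans
          (by exact fun x hx => by simpa using (Finset.mem_filter.mp hx).2.1))
    _ = (i : ℕ) := by
        rw [show (univ.filter fun j : Fin n => j < i) = Finset.Iio i by ext j; simp]
        exact Fin.card_Iio i


lemma invSeq_injective (v w : Equiv.Perm (Fin n)) (h : ∀ i, invSeq v i = invSeq w i) :
    v = w := by
  suffices hs : ∀ i : Fin n, v.symm i = w.symm i by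
    have : v.symm = w.symm := Equiv.ext hs
    have := congrArg Equiv.symm this
    simpa using this
  have key : ∀ i : Fin n, (∀ k, i < k → v.symm k = w.symm k) → v.symm i = w.symm i := by
    intro i IH
    set T : Finset (Fin n) := univ.filter (fun a => i < v a) with hT
    have hTw : T = univ.filter (fun a => i < w a) := by
      ext a
      simp only [hT, mem_filter, mem_univ, true_and]
      constructor
      · intro hva
        have ha : a = w.symm (v a) := by rw [← IH (v a) hva]; simp
        have : w a = v a := by conv_lhs => rw [ha]; simp
        rw [ha]; simpa using hva
      · intro hwa
        have ha : a = v.symm (w a) := by rw [IH (w a) hwa]; simp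
        have : v a = w a := by conv_lhs => rw [ha]; simp
        rw [this]; exact hwa
    have hgv : invSeq v i = (univ.filter fun a => v.symm i < a ∧ a ∉ T).card := by
      rw [invSeq_eq_pos]
      congr 1
      ext a
      simp only [mem_filter, mem_univ, true_and, hT]
      constructor
      · rintro ⟨h1, h2⟩
        exact ⟨h1, fun hx => absurd h2 (not_lt.mpr (le_of_lt hx))⟩
      · rintro ⟨h1, h2⟩
        refine ⟨h1, ?_⟩
        have h3 : v a ≠ i := by
          intro hx
          have : a = v.symm i := by rw [← hx]; simp
          exact absurd h1 (by rw [this]; exact lt_irrefl _)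
        exact lt_of_le_of_ne (not_lt.mp h2) h3
    have hgw : invSeq w i = (univ.filter fun a => w.symm i < a ∧ a ∉ T).card := by
      rw [invSeq_eq_pos, hTw]
      congr 1
      ext a
      simp only [mem_filter, mem_univ, true_and]
      constructor
      · rintro ⟨h1, h2⟩
        exact ⟨h1, fun hx => absurd h2 (not_lt.mpr (le_of_lt hx))⟩
      · rintro ⟨h1, h2⟩
        refine ⟨h1, ?_⟩
        have h3 : w a ≠ i := by
          intro hx
          have : a = w.symm i := by rw [← hx]; simp
          exact absurd h1 (by rw [this]; exact lt_irrefl _)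
        exact lt_of_le_of_ne (not_lt.mp h2) h3
    by_contra hne
    have hpT : v.symm i ∉ T := by simp [hT]
    have hqT : w.symm i ∉ T := by simp [hTw]
    have mono : ∀ p q : Fin n, p < q → q ∉ T →
        (univ.filter fun a => q < a ∧ a ∉ T).card < (univ.filter fun a => p < a ∧ a ∉ T).card := by
      intro p q hpq hq
      apply Finset.card_lt_card
      constructor
      · intro a ha
        simp only [mem_filter, mem_univ, true_and] at ha ⊢
        exact ⟨lt_trans hpq ha.1, ha.2⟩
      · intro hsub
        have : q ∈ univ.filter fun a => p < a ∧ a ∉ T := by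
          simp only [mem_filter, mem_univ, true_and]; exact ⟨hpq, hq⟩
        have := hsub this
        simp only [mem_filter, mem_univ, true_and] at this
        exact lt_irrefl _ this.1
    have hi := h i
    rcases lt_or_gt_of_ne hne with hlt | hlt
    · have := mono _ _ hlt hqT
      rw [← hgv, ← hgw] at this
      omega
    · have := mono _ _ hlt hpT
      rw [← hgw, ← hgv] at this
      omega
  -- downward strong induction
  have H : ∀ m : ℕ, ∀ i : Fin n, n - (i:ℕ) ≤ m → v.symm i = w.symm i := by
    intro m
    induction m with
    | zero => intro i hi; exact absurd i.isLt (by omega)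
    | succ m ih =>
        intro i hi
        exact key i (fun k hk => ih k (by omega))
  intro i
  exact H n i (by omega)


def sStat (v : Equiv.Perm (Fin n)) (p q : Fin n) : ℕ :=
  (univ.filter fun a : Fin n => p ≤ a ∧ v a < q).card

lemma sStat_step (v : Equiv.Perm (Fin n)) (x y : Fin n) (hxy : x < y) (hv : v x < v y)
    (p q : Fin n) : sStat v p q ≤ sStat (v * Equiv.swap x y) p q := by
  set w := v * Equiv.swap x y with hw
  have hwa : ∀ a, w a = v (Equiv.swap x y a) := fun a => rfl
  rcases le_or_gt p x with hpx | hpx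
  · -- equality via bijection
    apply le_of_eq
    apply Finset.card_bij (fun a _ => Equiv.swap x y a)
    · intro a ha
      simp only [mem_filter, mem_univ, true_and] at ha ⊢
      constructor
      · by_cases h1 : a = x
        · rw [h1, Equiv.swap_apply_left]; exact le_trans hpx (le_of_lt hxy)
        by_cases h2 : a = y
        · rw [h2, Equiv.swap_apply_right]; exact hpx
        · rw [Equiv.swap_apply_of_ne_of_ne h1 h2]; exact ha.1
      · rw [hwa, Equiv.swap_apply_self]; exact ha.2
    · intro a _ b _ hab; exact (Equiv.swap x y).injective hab
    · intro b hb
      simp only [mem_filter, mem_univ, true_and] at hb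
      refine ⟨Equiv.swap x y b, ?_, by simp⟩
      simp only [mem_filter, mem_univ, true_and]
      constructor
      · by_cases h1 : b = x
        · rw [h1, Equiv.swap_apply_left]; exact le_trans hpx (le_of_lt hxy)
        by_cases h2 : b = y
        · rw [h2, Equiv.swap_apply_right]; exact hpx
        · rw [Equiv.swap_apply_of_ne_of_ne h1 h2]; exact hb.1
      · rw [← hwa]; exact hb.2
  · rcases le_or_gt p y with hpy | hpy
    · -- subset
      apply Finset.card_le_card
      intro a ha
      simp only [mem_filter, mem_univ, true_and] at ha ⊢
      refine ⟨ha.1, ?_⟩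
      have hax : a ≠ x := fun h => absurd (h ▸ ha.1) (not_le.mpr hpx)
      by_cases hay : a = y
      · rw [hay, hwa, Equiv.swap_apply_right]
        exact lt_trans hv (hay ▸ ha.2)
      · rw [hwa, Equiv.swap_apply_of_ne_of_ne hax hay]; exact ha.2
    · -- equal sets
      apply le_of_eq
      unfold sStat
      have heq : ∀ a : Fin n, a ∈ (univ : Finset (Fin n)) →
          ((p ≤ a ∧ v a < q) ↔ (p ≤ a ∧ w a < q)) := by
        intro a _
        by_cases hpa : p ≤ a
        · have hax : a ≠ x := fun h => absurd (h ▸ hpa) (not_le.mpr hpx)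
          have hay : a ≠ y := fun h => absurd (h ▸ hpa) (not_le.mpr hpy)
          simp [hpa, hwa, Equiv.swap_apply_of_ne_of_ne hax hay]
        · simp [hpa]
      rw [Finset.filter_congr heq]

lemma bruhatLe_sStat {v w : Equiv.Perm (Fin n)} (h : bruhatLe v w) (p q : Fin n) :
    sStat v p q ≤ sStat w p q := by
  induction h with
  | refl => exact le_refl _
  | tail _ hstep ih =>
      obtain ⟨x, y, hxy, hvv, rfl, _⟩ := hstep
      exact le_trans ih (sStat_step _ x y hxy hvv p q)

lemma avoid_struct {v : Equiv.Perm (Fin n)} (hv : Avoids213 v) (i : Fin n)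
    (h0 : invSeq v i ≠ 0) :
    ∃ m : Fin n, v.symm i < m ∧ (∀ a, m ≤ a → v a < i) ∧ invSeq v i = n - (m : ℕ) := by
  set S := univ.filter (fun a : Fin n => v.symm i < a ∧ v a < i) with hS
  have hSne : S.Nonempty := by
    rw [← Finset.card_pos]
    have hc : S.card = invSeq v i := (invSeq_eq_pos v i).symm
    omega
  set m := S.min' hSne with hm
  have hmS : m ∈ S := Finset.min'_mem _ _
  simp only [hS, mem_filter, mem_univ, true_and] at hmS
  have claim : ∀ a, m ≤ a → v a < i := by
    intro a ha
    rcases eq_or_lt_of_le ha with rfl | hma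
    · exact hmS.2
    by_contra hcon
    have hai : v a ≠ i := by
      intro hx
      have : a = v.symm i := by rw [← hx]; simp
      rw [this] at hma
      exact absurd (lt_trans hmS.1 hma) (lt_irrefl _)
    have hia : i < v a := lt_of_le_of_ne (not_lt.mp hcon) (Ne.symm hai)
    exact hv ⟨v.symm i, m, a, hmS.1, hma, by simpa using hmS.2, by simpa using hia⟩
  refine ⟨m, hmS.1, claim, ?_⟩
  rw [invSeq_eq_pos]
  have : (univ.filter fun a : Fin n => v.symm i < a ∧ v a < i) = Finset.Ici m := by
    ext a
    simp only [mem_filter, mem_univ, true_and, Finset.mem_Ici]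
    constructor
    · intro ha; exact Finset.min'_le _ _ (by simp [hS, ha.1, ha.2])
    · intro ha; exact ⟨lt_of_lt_of_le hmS.1 ha, claim a ha⟩
  rw [this, Fin.card_Ici]

lemma sdom_to_mid {v w : Equiv.Perm (Fin n)} (hv : Avoids213 v)
    (hd : ∀ p q, sStat v p q ≤ sStat w p q) : midLe v w := by
  intro i
  by_cases h0 : invSeq v i = 0
  · omega
  obtain ⟨m, hpm, hall, hcard⟩ := avoid_struct hv i h0
  have hIci : (univ.filter fun a : Fin n => m ≤ a ∧ v a < i) = Finset.Ici m := by
    ext a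
    simp only [mem_filter, mem_univ, true_and, Finset.mem_Ici]
    exact ⟨fun h => h.1, fun h => ⟨h, hall a h⟩⟩
  have h1 : sStat v m i = n - (m : ℕ) := by
    rw [sStat, hIci, Fin.card_Ici]
  have h2 : sStat w m i ≤ n - (m : ℕ) := by
    rw [sStat, ← Fin.card_Ici m]
    exact Finset.card_le_card (fun a ha => by
      simp only [mem_filter, mem_univ, true_and, Finset.mem_Ici] at ha ⊢; exact ha.1)
  have h3 : sStat w m i = n - (m : ℕ) := le_antisymm h2 (h1 ▸ hd m i)
  have h4 : (univ.filter fun a : Fin n => m ≤ a ∧ w a < i) = Finset.Ici m := by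
    apply Finset.eq_of_subset_of_card_le
    · intro a ha
      simp only [mem_filter, mem_univ, true_and, Finset.mem_Ici] at ha ⊢; exact ha.1
    · rw [Fin.card_Ici, ← h3]; exact le_refl _
  have h5 : ∀ a, m ≤ a → w a < i := by
    intro a ha
    have : a ∈ univ.filter fun a : Fin n => m ≤ a ∧ w a < i := by
      rw [h4]; simpa using ha
    simp only [mem_filter] at this
    exact this.2.2
  have h6 : w.symm i < m := by
    by_contra hcon
    have := h5 (w.symm i) (not_lt.mp hcon)
    simp at this
  rw [hcard, invSeq_eq_pos, ← Fin.card_Ici m]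
  apply Finset.card_le_card
  intro a ha
  simp only [Finset.mem_Ici] at ha
  simp only [mem_filter, mem_univ, true_and]
  exact ⟨lt_of_lt_of_le h6 ha, h5 a ha⟩


lemma exists_before (v : Equiv.Perm (Fin n)) (i : Fin n) (hlt : invSeq v i < (i : ℕ)) :
    ∃ b, b < v.symm i ∧ v b < i := by
  by_contra hcon
  push_neg at hcon
  -- then all j < i are after position p, so invSeq v i = i
  have : (univ.filter fun j : Fin n => j < i) ⊆
      (univ.filter fun j : Fin n => j < i ∧ v.symm i < v.symm j) := by
    intro j hj
    simp only [mem_filter, mem_univ, true_and] at hj ⊢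
    refine ⟨hj, ?_⟩
    have h1 : ¬ v.symm j < v.symm i := by
      intro hx
      have := hcon (v.symm j) hx
      simp only [Equiv.apply_symm_apply] at this
      exact absurd hj (not_lt.mpr this)
    have h2 : v.symm j ≠ v.symm i := fun hx =>
      absurd (v.symm.injective hx) (ne_of_lt hj)
    exact lt_of_le_of_ne (not_lt.mp h1) (Ne.symm h2)
  have hcard := Finset.card_le_card this
  rw [show (univ.filter fun j : Fin n => j < i) = Finset.Iio i by ext j; simp,
    Fin.card_Iio] at hcard
  unfold invSeq at hlt
  omega

lemma cover_invSeq (v : Equiv.Perm (Fin n)) (i a : Fin n)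
    (hap : a < v.symm i) (hya : v a < i)
    (hmax : ∀ b, a < b → b < v.symm i → i < v b) :
    ∀ k, invSeq (v * Equiv.swap a (v.symm i)) k =
      if k = i then invSeq v i + 1 else invSeq v k := by
  set p := v.symm i with hp
  set v' := v * Equiv.swap a p with hv'
  set y := v a with hy
  have hvp : v p = i := by simp [hp]
  have hyi : y < i := hya
  have hsymm : ∀ k, v'.symm k = Equiv.swap a p (v.symm k) := by
    intro k
    simp [hv', Equiv.Perm.mul_def, Equiv.symm_trans_apply, Equiv.symm_swap]
  have hPi : v'.symm i = a := by rw [hsymm, ← hp, Equiv.swap_apply_right]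
  have hPy : v.symm y = a := by rw [hy]; simp
  have hP'y : v'.symm y = p := by rw [hsymm, hPy, Equiv.swap_apply_left]
  have hPfix : ∀ j, j ≠ i → j ≠ y → v'.symm j = v.symm j := by
    intro j hji hjy
    rw [hsymm]
    apply Equiv.swap_apply_of_ne_of_ne
    · intro hx; exact hjy (v.symm.injective (by rw [hx, hPy]))
    · intro hx; exact hji (v.symm.injective (hx.trans hp))
  intro k
  rcases lt_trichotomy k i with hk | hk | hk
  · -- k < i : sets equal
    rw [if_neg (ne_of_lt hk)]
    unfold invSeq
    congr 1
    apply Finset.filter_congr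
    intro j _
    by_cases hjk : j < k
    · simp only [hjk, true_and]
      have hji : j ≠ i := ne_of_lt (lt_trans hjk hk)
      by_cases hky : k = y
      · -- k = y, j < y so j ≠ y
        have hjy : j ≠ y := hky ▸ ne_of_lt hjk
        rw [hky, hP'y, hPy, hPfix j hji hjy]
        constructor
        · intro hpj
          exact lt_trans hap hpj
        · intro haj
          by_contra hnp
          have hjp : v.symm j ≠ p := fun hx => hji (by rw [hp] at hx; exact v.symm.injective hx)
          have h2 : v.symm j < p := lt_of_le_of_ne (not_lt.mp hnp) hjp
          have := hmax (v.symm j) haj h2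
          simp only [Equiv.apply_symm_apply] at this
          exact absurd (lt_trans hjk (hky ▸ hyi)) (not_lt.mpr (le_of_lt this))
      · have hP'k : v'.symm k = v.symm k := hPfix k (ne_of_lt hk) hky
        rw [hP'k]
        by_cases hjy : j = y
        · rw [hjy, hP'y, hPy]
          constructor
          · intro hkp
            by_contra hnka
            have hka : v.symm k ≠ a := fun hx => hky (by rw [← hPy] at hx; exact v.symm.injective hx)
            have h2 : a < v.symm k := lt_of_le_of_ne (not_lt.mp hnka) (Ne.symm hka)
            have := hmax (v.symm k) h2 hkp
            simp only [Equiv.apply_symm_apply] at this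
            exact absurd hk (not_lt.mpr (le_of_lt this))
          · intro hka
            exact lt_trans hka hap
        · rw [hPfix j hji hjy]
    · simp [hjk]
  · -- k = k : insert y
    subst hk
    rw [if_pos rfl]
    unfold invSeq
    have hset : (univ.filter fun j : Fin n => j < k ∧ v'.symm k < v'.symm j) =
        insert y (univ.filter fun j : Fin n => j < k ∧ v.symm k < v.symm j) := by
      ext j
      simp only [mem_filter, mem_univ, true_and, Finset.mem_insert]
      constructor
      · rintro ⟨hji, hcond⟩
        by_cases hjy : j = y
        · exact Or.inl hjy
        · refine Or.inr ⟨hji, ?_⟩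
          rw [hPi, hPfix j (ne_of_lt hji) hjy] at hcond
          by_contra hnp
          have hjp : v.symm j ≠ v.symm k := fun hx => (ne_of_lt hji) (v.symm.injective hx)
          have h2 : v.symm j < p := lt_of_le_of_ne (not_lt.mp hnp) (hp ▸ hjp)
          have := hmax (v.symm j) hcond h2
          simp only [Equiv.apply_symm_apply] at this
          exact absurd hji (not_lt.mpr (le_of_lt this))
      · rintro (rfl | ⟨hji, hcond⟩)
        · exact ⟨hyi, by rw [hPi, hP'y]; exact hap⟩
        · have hjy : j ≠ y := by
            intro hx
            rw [hx, hPy] at hcond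
            exact absurd (lt_trans hcond hap) (lt_irrefl _)
          refine ⟨hji, ?_⟩
          rw [hPi, hPfix j (ne_of_lt hji) hjy]
          exact lt_trans hap hcond
    rw [hset, Finset.card_insert_of_notMem]
    simp only [mem_filter, mem_univ, true_and, not_and]
    intro _
    rw [hPy, ← hp]
    exact not_lt.mpr (le_of_lt hap)
  · -- i < k : bijection via swap i y
    rw [if_neg (ne_of_gt hk)]
    unfold invSeq
    symm
    apply Finset.card_bij (fun j _ => Equiv.swap i y j)
    · intro j hj
      simp only [mem_filter, mem_univ, true_and] at hj ⊢
      have hki : k ≠ i := ne_of_gt hk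
      have hky : k ≠ y := ne_of_gt (lt_trans hyi hk)
      have hP'k : v'.symm k = v.symm k := hPfix k hki hky
      by_cases hji : j = i
      · rw [hji, Equiv.swap_apply_left]
        rw [hji, ← hp] at hj
        exact ⟨lt_trans hyi hk, by rw [hP'k, hP'y]; exact hj.2⟩
      by_cases hjy : j = y
      · rw [hjy, Equiv.swap_apply_right]
        rw [hjy, hPy] at hj
        exact ⟨hk, by rw [hP'k, hPi]; exact hj.2⟩
      · rw [Equiv.swap_apply_of_ne_of_ne hji hjy]
        exact ⟨hj.1, by rw [hP'k, hPfix j hji hjy]; exact hj.2⟩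
    · intro j _ j' _ hjj'; exact (Equiv.swap i y).injective hjj'
    · intro b hb
      simp only [mem_filter, mem_univ, true_and] at hb
      refine ⟨Equiv.swap i y b, ?_, by simp⟩
      simp only [mem_filter, mem_univ, true_and]
      have hki : k ≠ i := ne_of_gt hk
      have hky : k ≠ y := ne_of_gt (lt_trans hyi hk)
      have hP'k : v'.symm k = v.symm k := hPfix k hki hky
      rw [hP'k] at hb
      by_cases hbi : b = i
      · rw [hbi, Equiv.swap_apply_left]
        rw [hbi, hPi] at hb
        exact ⟨lt_trans hyi hk, by rw [hPy]; exact hb.2⟩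
      by_cases hby : b = y
      · rw [hby, Equiv.swap_apply_right]
        rw [hby, hP'y] at hb
        exact ⟨hk, by rw [← hp]; exact hb.2⟩
      · rw [Equiv.swap_apply_of_ne_of_ne hbi hby]
        refine ⟨hb.1, ?_⟩
        rw [hPfix b hbi hby] at hb
        exact hb.2


lemma inversions_eq_sum (v : Equiv.Perm (Fin n)) : inversions v = ∑ i : Fin n, invSeq v i := by
  unfold inversions invSeq
  rw [Finset.card_filter, Fintype.sum_prod_type]
  rw [← Equiv.sum_comp v.symm (fun a => ∑ b : Fin n, if a < b ∧ v b < v a then (1:ℕ) else 0)]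
  simp only [Finset.card_filter]
  refine Finset.sum_congr rfl fun i _ => ?_
  rw [← Equiv.sum_comp v.symm (fun b => if v.symm i < b ∧ v b < v (v.symm i) then (1:ℕ) else 0)]
  refine Finset.sum_congr rfl fun j _ => ?_
  simp [and_comm]

lemma mid_to_bruhat : ∀ N : ℕ, ∀ v w : Equiv.Perm (Fin n), midLe v w →
    inversions w - inversions v ≤ N → bruhatLe v w := by
  intro N
  induction N with
  | zero =>
      intro v w hm hN
      by_cases hvw : ∀ i, invSeq v i = invSeq w i
      · rw [invSeq_injective v w hvw]; exact Relation.ReflTransGen.refl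
      · exfalso
        push_neg at hvw
        obtain ⟨i, hne⟩ := hvw
        have hsum : ∑ k : Fin n, invSeq v k < ∑ k : Fin n, invSeq w k :=
          Finset.sum_lt_sum (fun k _ => hm k) ⟨i, Finset.mem_univ i,
            lt_of_le_of_ne (hm i) hne⟩
        rw [← inversions_eq_sum, ← inversions_eq_sum] at hsum
        omega
  | succ N ih =>
      intro v w hm hN
      by_cases hvw : ∀ i, invSeq v i = invSeq w i
      · rw [invSeq_injective v w hvw]; exact Relation.ReflTransGen.refl
      obtain ⟨i, hne⟩ := not_forall.mp hvw
      have hstrict : invSeq v i < invSeq w i := lt_of_le_of_ne (hm i) hne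
      have hlt_i : invSeq v i < (i : ℕ) := lt_of_lt_of_le hstrict (invSeq_le w i)
      obtain ⟨b, hb1, hb2⟩ := exists_before v i hlt_i
      set p := v.symm i with hp
      set B := univ.filter (fun c : Fin n => c < p ∧ v c < i) with hB
      have hBne : B.Nonempty := ⟨b, by simp [hB, hb1, hb2]⟩
      set a := B.max' hBne with ha
      have haB : a ∈ B := Finset.max'_mem _ _
      simp only [hB, mem_filter, mem_univ, true_and] at haB
      have hmax : ∀ c, a < c → c < p → i < v c := by
        intro c hac hcp
        by_contra hcon
        have hci : v c ≠ i := by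
          intro hx
          have : c = p := by rw [hp, ← hx]; simp
          exact absurd (this ▸ hcp) (lt_irrefl _)
        have hvc : v c < i := lt_of_le_of_ne (not_lt.mp hcon) hci
        have : c ∈ B := by simp [hB, hcp, hvc]
        exact absurd (Finset.le_max' B c this) (not_le.mpr hac)
      have hcov := cover_invSeq v i a haB.1 haB.2 hmax
      set v' := v * Equiv.swap a p with hv'
      have hinv' : inversions v' = inversions v + 1 := by
        rw [inversions_eq_sum, inversions_eq_sum]
        have : ∀ k : Fin n, invSeq v' k = (if k = i then 1 else 0) + invSeq v k := by
          intro k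
          rw [hcov k]
          by_cases hk : k = i <;> simp [hk, Nat.add_comm]
        rw [Finset.sum_congr rfl (fun k _ => this k), Finset.sum_add_distrib,
          Finset.sum_ite_eq' univ i (fun _ => 1)]
        simp [Nat.add_comm]
      have hm' : midLe v' w := by
        intro k
        rw [hcov k]
        by_cases hk : k = i
        · rw [if_pos hk, hk]; omega
        · rw [if_neg hk]; exact hm k
      have hmeas : inversions w - inversions v' ≤ N := by
        have hle : inversions v' ≤ inversions w := by
          rw [inversions_eq_sum, inversions_eq_sum]
          exact Finset.sum_le_sum (fun k _ => hm' k)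
        omega
      exact Relation.ReflTransGen.head
        ⟨a, p, haB.1, by rw [hp]; simpa using haB.2, rfl, hinv'⟩
        (ih v' w hm' hmeas)


/-- On 213-avoiding permutations, the middle order coincides with the Bruhat order. -/
theorem middle_eq_bruhat_on_213_avoiders (n : ℕ) (v w : Equiv.Perm (Fin n))
    (hv : Avoids213 v) (hw : Avoids213 w) :
    midLe v w ↔ bruhatLe v w := by
  constructor
  · intro hm
    exact mid_to_bruhat (inversions w) v w hm (Nat.sub_le _ _)
  · intro hb
    exact sdom_to_mid hv (fun p q => bruhatLe_sStat hb p q)
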